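/- Let α > 0 and V_α(t,S) = C√(αt)·[2∫₀^{S/√(4αt)} (∫₀^u exp(x²) dx) du - 1] with C > 0. For all S ≥ 0 and t > 0, the discrete derivative ∇̄_S V_α(t,S) = (1/2)[V_α(t,S+1) - V_α(t,S-1)] is, as a function of t, decreasing and convex; and as a function of S, convex. -/

import Mathlib

open intervalIntegral Set MeasureTheory

/-- The switching-adjusted potential
`V_α(t,S) = C √(αt) [2 ∫₀^{S/√(4αt)} (∫₀^u exp(x²) dx) du - 1]`. -/
noncomputable def Vpot (C α t S : ℝ) : ℝ :=
  C * Real.sqrt (α * t) *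
    (2 * (∫ u in (0:ℝ)..(S / Real.sqrt (4 * α * t)),
        ∫ x in (0:ℝ)..u, Real.exp (x ^ 2)) - 1)

noncomputable def gg (u : ℝ) : ℝ := ∫ x in (0:ℝ)..u, Real.exp (x ^ 2)
noncomputable def FF (y : ℝ) : ℝ := ∫ u in (0:ℝ)..y, gg u

lemma contE : Continuous fun x : ℝ => Real.exp (x ^ 2) := by continuity

lemma gg_hasDeriv (u : ℝ) : HasDerivAt gg (Real.exp (u ^ 2)) u :=
  integral_hasDerivAt_right (contE.intervalIntegrable _ _)
    (contE.stronglyMeasurableAtFilter _ _) contE.continuousAt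

lemma gg_cont : Continuous gg :=
  continuous_iff_continuousAt.2 fun u => (gg_hasDeriv u).continuousAt

lemma FF_hasDeriv (y : ℝ) : HasDerivAt FF (gg y) y :=
  integral_hasDerivAt_right (gg_cont.intervalIntegrable _ _)
    (gg_cont.stronglyMeasurableAtFilter _ _) gg_cont.continuousAt

lemma FF_cont : Continuous FF :=
  continuous_iff_continuousAt.2 fun y => (FF_hasDeriv y).continuousAt

lemma gg_mono : Monotone gg :=
  StrictMono.monotone (strictMono_of_hasDerivAt_pos (fun x => gg_hasDeriv x)
    (fun x => Real.exp_pos _))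

lemma gg_odd (u : ℝ) : gg (-u) = - gg u := by
  have h := intervalIntegral.integral_comp_neg (a := u) (b := (0:ℝ)) (fun x => Real.exp (x^2))
  simp only [neg_sq, neg_zero] at h
  unfold gg
  rw [← h, intervalIntegral.integral_symm]

lemma gg_convex : ConvexOn ℝ (Ici 0) gg := by
  refine MonotoneOn.convexOn_of_deriv (convex_Ici 0) gg_cont.continuousOn
    (fun x _ => (gg_hasDeriv x).differentiableAt.differentiableWithinAt) ?_
  intro x hx y hy hxy
  rw [interior_Ici] at hx hy
  rw [(gg_hasDeriv x).deriv, (gg_hasDeriv y).deriv]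
  exact Real.exp_le_exp.2 (pow_le_pow_left₀ (le_of_lt hx) hxy 2)

lemma sqrt_four : Real.sqrt 4 = 2 := by
  rw [show (4:ℝ) = 2^2 by norm_num, Real.sqrt_sq (by norm_num)]

lemma sqrt4αt (α t : ℝ) : Real.sqrt (4 * α * t) = 2 * Real.sqrt (α * t) := by
  rw [mul_assoc, Real.sqrt_mul (by norm_num : (0:ℝ) ≤ 4), sqrt_four]

lemma odd_integral_zero {h : ℝ → ℝ} (hc : Continuous h) (hodd : ∀ y, h (-y) = - h y)
    (a : ℝ) : ∫ y in (-a)..a, h y = 0 := by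
  have h1 : ∫ y in (-a)..(0:ℝ), h y = - ∫ y in (0:ℝ)..a, h y := by
    have h0 := intervalIntegral.integral_comp_neg (a := (0:ℝ)) (b := a) h
    simp only [neg_zero] at h0
    rw [← h0]
    simp [hodd, intervalIntegral.integral_neg]
  have h2 := intervalIntegral.integral_add_adjacent_intervals
    (hc.intervalIntegrable (μ := MeasureTheory.volume) (-a) 0)
    (hc.intervalIntegrable (μ := MeasureTheory.volume) 0 a)
  linarith

/-- The key identity rewriting the discrete derivative as an integral. -/
lemma key (C α t S : ℝ) (hα : 0 < α) (ht : 0 < t) :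
    (Vpot C α t (S + 1) - Vpot C α t (S - 1)) / 2
      = (C / 2) * ∫ y in (S-1)..(S+1), gg (y / Real.sqrt (4 * α * t)) := by
  set c := Real.sqrt (4 * α * t) with hcdef
  have hc : 0 < c := Real.sqrt_pos.2 (by positivity)
  have hsub : (∫ y in (S-1)..(S+1), gg (y / c)) = c • ∫ y in (S-1)/c..(S+1)/c, gg y :=
    intervalIntegral.integral_comp_div (a := S-1) (b := S+1) gg hc.ne'
  have hadd := intervalIntegral.integral_add_adjacent_intervals
    (gg_cont.intervalIntegrable (μ := MeasureTheory.volume) 0 ((S-1)/c))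
    (gg_cont.intervalIntegrable (μ := MeasureTheory.volume) ((S-1)/c) ((S+1)/c))
  have hsplit : (∫ y in (S-1)/c..(S+1)/c, gg y) = FF ((S+1)/c) - FF ((S-1)/c) := by
    unfold FF; linarith
  have hVb : Vpot C α t (S+1) = C * Real.sqrt (α * t) * (2 * FF ((S+1)/c) - 1) := rfl
  have hVa : Vpot C α t (S-1) = C * Real.sqrt (α * t) * (2 * FF ((S-1)/c) - 1) := rfl
  have hc2 : c = 2 * Real.sqrt (α * t) := sqrt4αt α t
  rw [hVb, hVa, hsub, hsplit, smul_eq_mul, hc2]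
  ring

lemma ggc_cont (c : ℝ) : Continuous fun y => gg (y / c) :=
  gg_cont.comp (continuous_id.div_const c)

lemma fold (c S : ℝ) (hS : 0 ≤ S) :
    (∫ y in (S-1)..(S+1), gg (y/c)) = ∫ y in |S-1|..(S+1), gg (y/c) := by
  rcases le_or_gt 1 S with h | h
  · rw [abs_of_nonneg (by linarith)]
  · rw [abs_of_neg (by linarith)]
    have hzero : (∫ y in (S-1)..(-(S-1)), gg (y/c)) = 0 := by
      have h0 := odd_integral_zero (ggc_cont c)
        (fun y => by rw [neg_div]; exact gg_odd _) (-(S-1))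
      simpa using h0
    have hadd := intervalIntegral.integral_add_adjacent_intervals
      ((ggc_cont c).intervalIntegrable (μ := MeasureTheory.volume) (S-1) (-(S-1)))
      ((ggc_cont c).intervalIntegrable (μ := MeasureTheory.volume) (-(S-1)) (S+1))
    rw [← hadd, hzero, zero_add]

lemma inv_sqrt_convex_comb {u v a b s : ℝ} (hu : 0 < u) (hv : 0 < v) (ha : 0 ≤ a)
    (hb : 0 ≤ b) (hab : a + b = 1) (hs : 0 < s) (hs2 : s^2 = a*u^2 + b*v^2) :
    1/s ≤ a/u + b/v := by
  have h1 : a*u + b*v ≤ s := by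
    nlinarith [sq_nonneg (u - v), mul_nonneg ha hb,
      mul_nonneg (mul_nonneg ha hu.le) (mul_nonneg hb hv.le)]
  have h2 : u*v ≤ (a*v + b*u) * (a*u + b*v) := by
    have e : (a*v + b*u) * (a*u + b*v) - u*v = a*b*(u-v)^2 := by
      have hb' : b = 1 - a := by linarith
      subst hb'; ring
    nlinarith [mul_nonneg (mul_nonneg ha hb) (sq_nonneg (u-v))]
  have hX : 0 ≤ a*v + b*u := by positivity
  have h3 : u*v ≤ (a*v + b*u) * s := h2.trans (mul_le_mul_of_nonneg_left h1 hX)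
  rw [div_add_div _ _ hu.ne' hv.ne', div_le_div_iff₀ hs (by positivity)]
  nlinarith

lemma pointwise_convex {α t1 t2 a b : ℝ} (hα : 0 < α) (ht1 : 0 < t1) (ht2 : 0 < t2)
    (ha : 0 ≤ a) (hb : 0 ≤ b) (hab : a + b = 1) {k : ℝ} (hk : 0 ≤ k) :
    gg (k / Real.sqrt (4*α*(a*t1+b*t2))) ≤
      a * gg (k / Real.sqrt (4*α*t1)) + b * gg (k / Real.sqrt (4*α*t2)) := by
  set u := Real.sqrt (4*α*t1) with hu'
  set v := Real.sqrt (4*α*t2) with hv'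
  set s := Real.sqrt (4*α*(a*t1+b*t2)) with hs'
  have ht : 0 < a*t1 + b*t2 := by
    rcases eq_or_lt_of_le ha with h | h
    · have hb1 : b = 1 := by linarith
      rw [← h, hb1]; simpa using ht2
    · nlinarith [mul_pos h ht1, mul_nonneg hb ht2.le]
  have hu : 0 < u := Real.sqrt_pos.2 (by positivity)
  have hv : 0 < v := Real.sqrt_pos.2 (by positivity)
  have hs : 0 < s := Real.sqrt_pos.2 (by positivity)
  have hs2 : s^2 = a*u^2 + b*v^2 := by
    rw [hu', hv', hs', Real.sq_sqrt (by positivity), Real.sq_sqrt (by positivity),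
      Real.sq_sqrt (by positivity)]
    ring
  have hinv := inv_sqrt_convex_comb hu hv ha hb hab hs hs2
  have hkk : k / s ≤ a * (k/u) + b * (k/v) := by
    have := mul_le_mul_of_nonneg_left hinv hk
    calc k / s = k * (1/s) := by ring
    _ ≤ k * (a/u + b/v) := this
    _ = a * (k/u) + b * (k/v) := by ring
  calc gg (k/s) ≤ gg (a * (k/u) + b * (k/v)) := gg_mono hkk
  _ ≤ a * gg (k/u) + b * gg (k/v) := by
      have := gg_convex.2 (x := k/u) (y := k/v) (mem_Ici.2 (by positivity))
        (mem_Ici.2 (by positivity)) ha hb hab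
      simpa using this

lemma integral_convex_t {α m M : ℝ} (hα : 0 < α) (hm : 0 ≤ m) (hmM : m ≤ M) :
    ConvexOn ℝ (Ioi 0) (fun t => ∫ y in m..M, gg (y / Real.sqrt (4*α*t))) := by
  refine ⟨convex_Ioi 0, fun t1 ht1 t2 ht2 a b ha hb hab => ?_⟩
  simp only [smul_eq_mul]
  have ht1' : (0:ℝ) < t1 := ht1
  have ht2' : (0:ℝ) < t2 := ht2
  have hint : ∀ t : ℝ, IntervalIntegrable (fun y => gg (y / Real.sqrt (4*α*t))) volume m M :=
    fun t => (ggc_cont _).intervalIntegrable m M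
  have hcomb : IntervalIntegrable
      (fun y => a * gg (y / Real.sqrt (4*α*t1)) + b * gg (y / Real.sqrt (4*α*t2))) volume m M :=
    ((continuous_const.mul (ggc_cont _)).add
      (continuous_const.mul (ggc_cont _))).intervalIntegrable m M
  have hmono := intervalIntegral.integral_mono_on (μ := volume) hmM (hint (a*t1+b*t2)) hcomb
    (fun y hy => pointwise_convex hα ht1' ht2' ha hb hab (le_trans hm hy.1))
  calc (∫ y in m..M, gg (y / Real.sqrt (4*α*(a*t1+b*t2))))
      ≤ ∫ y in m..M, (a * gg (y / Real.sqrt (4*α*t1)) + b * gg (y / Real.sqrt (4*α*t2))) := hmono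
  _ = a * (∫ y in m..M, gg (y / Real.sqrt (4*α*t1)))
        + b * ∫ y in m..M, gg (y / Real.sqrt (4*α*t2)) := by
      rw [intervalIntegral.integral_add (f := fun y => a * gg (y / Real.sqrt (4*α*t1)))
        (g := fun y => b * gg (y / Real.sqrt (4*α*t2)))
        ((continuous_const.mul (ggc_cont _)).intervalIntegrable m M)
        ((continuous_const.mul (ggc_cont _)).intervalIntegrable m M),
        intervalIntegral.integral_const_mul, intervalIntegral.integral_const_mul]

lemma integral_anti_t {α m M : ℝ} (hα : 0 < α) (hm : 0 ≤ m) (hmM : m ≤ M) :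
    AntitoneOn (fun t => ∫ y in m..M, gg (y / Real.sqrt (4*α*t))) (Ioi 0) := by
  intro t1 ht1 t2 ht2 h12
  have ht1' : (0:ℝ) < t1 := ht1
  have ht2' : (0:ℝ) < t2 := ht2
  refine intervalIntegral.integral_mono_on (μ := volume) hmM
    ((ggc_cont _).intervalIntegrable m M) ((ggc_cont _).intervalIntegrable m M) ?_
  intro y hy
  have hy0 : 0 ≤ y := le_trans hm hy.1
  have h1 : (0:ℝ) < Real.sqrt (4*α*t1) := Real.sqrt_pos.2 (by positivity)
  have h2 : Real.sqrt (4*α*t1) ≤ Real.sqrt (4*α*t2) :=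
    Real.sqrt_le_sqrt (by nlinarith)
  have hdiv : y / Real.sqrt (4*α*t2) ≤ y / Real.sqrt (4*α*t1) := by gcongr
  exact gg_mono hdiv

lemma gg_sub_eq (p q : ℝ) : gg q - gg p = ∫ x in p..q, Real.exp (x ^ 2) := by
  have h := intervalIntegral.integral_add_adjacent_intervals
    (contE.intervalIntegrable (μ := volume) 0 p) (contE.intervalIntegrable (μ := volume) p q)
  unfold gg; linarith

lemma exp_sq_mono_shift {d x : ℝ} (hd : 0 ≤ d) (hx : d / 2 ≤ x) :
    Real.exp ((x - d) ^ 2) ≤ Real.exp (x ^ 2) :=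
  Real.exp_le_exp.2 (by nlinarith)

lemma shifted_integral_le {a1 b1 b2 d : ℝ} (hd : 0 ≤ d) (hb : d / 2 ≤ b1) (hbb : b1 ≤ b2)
    (ha1 : a1 = b1 - d) :
    (∫ x in a1..(b2 - d), Real.exp (x ^ 2)) ≤ ∫ x in b1..b2, Real.exp (x ^ 2) := by
  have hshift : (∫ x in b1..b2, Real.exp ((x - d) ^ 2))
      = ∫ x in a1..(b2 - d), Real.exp (x ^ 2) := by
    rw [intervalIntegral.integral_comp_sub_right (fun x => Real.exp (x ^ 2)) d, ha1]
  rw [← hshift]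
  refine intervalIntegral.integral_mono_on (μ := volume) hbb
    ((contE.comp (continuous_id.sub continuous_const)).intervalIntegrable b1 b2)
    (contE.intervalIntegrable b1 b2) ?_
  exact fun x hx => exp_sq_mono_shift hd (hb.trans hx.1)

lemma core_S_mono {c S1 S2 : ℝ} (hc : 0 < c) (hS1 : 0 ≤ S1) (h12 : S1 ≤ S2) :
    gg ((S1+1)/c) - gg ((S1-1)/c) ≤ gg ((S2+1)/c) - gg ((S2-1)/c) := by
  set d := 2 / c with hd'
  have hd : 0 ≤ d := by positivity
  have ha1 : (S1-1)/c = (S1+1)/c - d := by rw [hd']; field_simp; ring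
  have ha2 : (S2-1)/c = (S2+1)/c - d := by rw [hd']; field_simp; ring
  have hb : d / 2 ≤ (S1+1)/c := by
    rw [hd', div_div, div_le_div_iff₀ (by positivity) hc]
    nlinarith
  have hbb : (S1+1)/c ≤ (S2+1)/c := by gcongr
  have hkey := shifted_integral_le hd hb hbb ha1
  rw [← ha2] at hkey
  rw [gg_sub_eq, gg_sub_eq]
  have h1 := intervalIntegral.integral_add_adjacent_intervals
    (contE.intervalIntegrable (μ := volume) ((S1-1)/c) ((S1+1)/c))
    (contE.intervalIntegrable (μ := volume) ((S1+1)/c) ((S2+1)/c))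
  have h2 := intervalIntegral.integral_add_adjacent_intervals
    (contE.intervalIntegrable (μ := volume) ((S1-1)/c) ((S2-1)/c))
    (contE.intervalIntegrable (μ := volume) ((S2-1)/c) ((S2+1)/c))
  linarith

lemma phi_hasDeriv (c : ℝ) (hc : 0 < c) (S : ℝ) :
    HasDerivAt (fun S => FF ((S+1)/c) - FF ((S-1)/c))
      (gg ((S+1)/c) * (1/c) - gg ((S-1)/c) * (1/c)) S := by
  have h1 : HasDerivAt (fun S : ℝ => (S+1)/c) (1/c) S := by
    simpa using ((hasDerivAt_id S).add_const 1).div_const c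
  have h2 : HasDerivAt (fun S : ℝ => (S-1)/c) (1/c) S := by
    simpa using ((hasDerivAt_id S).sub_const 1).div_const c
  exact ((FF_hasDeriv ((S+1)/c)).comp S h1).sub ((FF_hasDeriv ((S-1)/c)).comp S h2)

lemma phi_convex (c : ℝ) (hc : 0 < c) :
    ConvexOn ℝ (Ici 0) (fun S => FF ((S+1)/c) - FF ((S-1)/c)) := by
  refine MonotoneOn.convexOn_of_deriv (convex_Ici 0)
    ((FF_cont.comp (continuous_id.add continuous_const |>.div_const c)).sub
      (FF_cont.comp (continuous_id.sub continuous_const |>.div_const c))).continuousOn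
    (fun x _ => (phi_hasDeriv c hc x).differentiableAt.differentiableWithinAt) ?_
  intro x hx y hy hxy
  rw [interior_Ici] at hx hy
  rw [(phi_hasDeriv c hc x).deriv, (phi_hasDeriv c hc y).deriv]
  have := core_S_mono hc (le_of_lt hx) hxy
  have h1c : 0 ≤ 1/c := by positivity
  nlinarith [mul_le_mul_of_nonneg_right this h1c]

/-- For `S ≥ 0`, the discrete derivative `∇̄_S V_α(t,S) = (V_α(t,S+1) - V_α(t,S-1))/2` is,
as a function of `t > 0`, decreasing and convex; and as a function of `S ≥ 0`, convex. -/
theorem Vpot_discrete_deriv_props (C α : ℝ) (hC : 0 < C) (hα : 0 < α) :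
    (∀ S : ℝ, 0 ≤ S →
      AntitoneOn (fun t => (Vpot C α t (S + 1) - Vpot C α t (S - 1)) / 2) (Set.Ioi 0) ∧
      ConvexOn ℝ (Set.Ioi 0) (fun t => (Vpot C α t (S + 1) - Vpot C α t (S - 1)) / 2)) ∧
    (∀ t : ℝ, 0 < t →
      ConvexOn ℝ (Set.Ici 0) (fun S => (Vpot C α t (S + 1) - Vpot C α t (S - 1)) / 2)) := by
  constructor
  · intro S hS
    set m := |S - 1| with hm'
    have hm : 0 ≤ m := abs_nonneg _
    have hmM : m ≤ S + 1 := by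
      rw [hm', abs_le]; constructor <;> linarith
    have hEq : ∀ t : ℝ, t ∈ Ioi (0:ℝ) →
        (Vpot C α t (S + 1) - Vpot C α t (S - 1)) / 2
          = (C/2) * ∫ y in m..(S+1), gg (y / Real.sqrt (4*α*t)) := by
      intro t ht
      rw [key C α t S hα ht, fold _ S hS]
    constructor
    · intro t1 ht1 t2 ht2 h12
      show (Vpot C α t2 (S + 1) - Vpot C α t2 (S - 1)) / 2
        ≤ (Vpot C α t1 (S + 1) - Vpot C α t1 (S - 1)) / 2
      rw [hEq t1 ht1, hEq t2 ht2]
      have := integral_anti_t (α := α) hα hm hmM ht1 ht2 h12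
      have hC2 : 0 ≤ C/2 := by positivity
      exact mul_le_mul_of_nonneg_left this hC2
    · have hconv := (integral_convex_t (α := α) hα hm hmM).smul (c := C/2) (by positivity)
      refine hconv.congr ?_
      intro t ht
      show (C / 2) • (∫ y in m..(S+1), gg (y / Real.sqrt (4*α*t)))
        = (Vpot C α t (S + 1) - Vpot C α t (S - 1)) / 2
      rw [smul_eq_mul, hEq t ht]
  · intro t ht
    set c := Real.sqrt (4 * α * t) with hcdef
    have hc : 0 < c := Real.sqrt_pos.2 (by positivity)
    have hfun : (fun S => (Vpot C α t (S + 1) - Vpot C α t (S - 1)) / 2)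
        = fun S => (C * Real.sqrt (α * t)) • (FF ((S+1)/c) - FF ((S-1)/c)) := by
      funext S
      have hVb : Vpot C α t (S+1) = C * Real.sqrt (α * t) * (2 * FF ((S+1)/c) - 1) := rfl
      have hVa : Vpot C α t (S-1) = C * Real.sqrt (α * t) * (2 * FF ((S-1)/c) - 1) := rfl
      rw [hVb, hVa, smul_eq_mul]
      ring
    rw [hfun]
    exact (phi_convex c hc).smul (by positivity)
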